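/- arXiv:1401.6926 — 2 statements merged into one kernel-verified Lean document; each statement's English description precedes it below -/
import Mathlib

section
/- Let p ≥ 1, let z be a standard Gaussian vector in ℝᵖ and x = z/‖z‖. Let U be a symmetric p×p real matrix, let ΔΩ' be symmetric with spectral norm ε = ‖ΔΩ'‖₂ < 1, and set Ω' = I + ΔΩ' (positive definite). Then for every even natural number ν ≥ 2, E[(xᵀUx)ᵛ]/(1+ε)ᵛ ≤ E[((xᵀUx)/(xᵀΩ'x))ᵛ] ≤ E[(xᵀUx)ᵛ]/(1−ε)ᵛ; moreover the same two-sided bound holds for every natural number ν ≥ 1 when U is positive semidefinite. -/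
open MeasureTheory ProbabilityTheory Matrix

/-- The standard Gaussian measure `N(0, I_p)` on `ℝᵖ`, as the `p`-fold product of
standard normal distributions. -/
noncomputable def stdGaussian (p : ℕ) : Measure (Fin p → ℝ) :=
  Measure.pi fun _ => gaussianReal 0 1

/-- Euclidean norm of a vector in `ℝᵖ`. -/
noncomputable def euclNorm {p : ℕ} (v : Fin p → ℝ) : ℝ := Real.sqrt (v ⬝ᵥ v)

/-- Frobenius norm of a real matrix. -/
noncomputable def frobNorm {p : ℕ} (A : Matrix (Fin p) (Fin p) ℝ) : ℝ :=
  Real.sqrt (Matrix.trace (Aᵀ * A))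

/-- Spectral (L2 operator) norm of a real matrix. -/
noncomputable def specNorm {p : ℕ} (A : Matrix (Fin p) (Fin p) ℝ) : ℝ :=
  sSup {r : ℝ | ∃ v : Fin p → ℝ, euclNorm v = 1 ∧ r = euclNorm (A.mulVec v)}

/-- Minimal eigenvalue of a symmetric real matrix (via the Rayleigh quotient). -/
noncomputable def lambdaMin {p : ℕ} (A : Matrix (Fin p) (Fin p) ℝ) : ℝ :=
  sInf {r : ℝ | ∃ v : Fin p → ℝ, euclNorm v = 1 ∧ r = v ⬝ᵥ A.mulVec v}

/-- Maximal eigenvalue of a symmetric real matrix (via the Rayleigh quotient). -/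
noncomputable def lambdaMax {p : ℕ} (A : Matrix (Fin p) (Fin p) ℝ) : ℝ :=
  sSup {r : ℝ | ∃ v : Fin p → ℝ, euclNorm v = 1 ∧ r = v ⬝ᵥ A.mulVec v}

/-- Normalization of a vector to the unit sphere: `z ↦ z / ‖z‖`. -/
noncomputable def unitize {p : ℕ} (z : Fin p → ℝ) : Fin p → ℝ := (euclNorm z)⁻¹ • z

/-- `cos φ₀ = Tr Ω / (√p ‖Ω‖_F)`: the cosine of the angle between `Ω` and the identity. -/
noncomputable def cosAngleId {p : ℕ} (Ω : Matrix (Fin p) (Fin p) ℝ) : ℝ :=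
  Matrix.trace Ω / (Real.sqrt p * frobNorm Ω)

private lemma dot_self_nonneg' {p : ℕ} (v : Fin p → ℝ) : 0 ≤ v ⬝ᵥ v :=
  Finset.sum_nonneg fun i _ => mul_self_nonneg _

private lemma euclNorm_nonneg' {p : ℕ} (v : Fin p → ℝ) : 0 ≤ euclNorm v := Real.sqrt_nonneg _

private lemma sq_euclNorm' {p : ℕ} (v : Fin p → ℝ) : euclNorm v ^ 2 = v ⬝ᵥ v :=
  Real.sq_sqrt (dot_self_nonneg' v)

private lemma abs_dot_le' {p : ℕ} (v w : Fin p → ℝ) : |v ⬝ᵥ w| ≤ euclNorm v * euclNorm w := by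
  have h := Finset.sum_mul_sq_le_sq_mul_sq Finset.univ v w
  calc |v ⬝ᵥ w| = Real.sqrt ((v ⬝ᵥ w)^2) := (Real.sqrt_sq_eq_abs _).symm
    _ ≤ Real.sqrt ((v ⬝ᵥ v) * (w ⬝ᵥ w)) := by
        apply Real.sqrt_le_sqrt
        simpa [dotProduct, pow_two] using h
    _ = euclNorm v * euclNorm w := Real.sqrt_mul (dot_self_nonneg' v) _

private lemma frobNorm_nonneg' {p : ℕ} (A : Matrix (Fin p) (Fin p) ℝ) : 0 ≤ frobNorm A :=
  Real.sqrt_nonneg _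

private lemma euclNorm_mulVec_le' {p : ℕ} (A : Matrix (Fin p) (Fin p) ℝ) (v : Fin p → ℝ) :
    euclNorm (A.mulVec v) ≤ frobNorm A * euclNorm v := by
  have h1 : A.mulVec v ⬝ᵥ A.mulVec v ≤ Matrix.trace (Aᵀ * A) * (v ⬝ᵥ v) := by
    have h2 : ∀ i : Fin p, (A.mulVec v i) * (A.mulVec v i) ≤ (∑ j, A i j ^ 2) * (v ⬝ᵥ v) := by
      intro i
      have := Finset.sum_mul_sq_le_sq_mul_sq Finset.univ (fun j => A i j) v
      simpa [Matrix.mulVec, dotProduct, pow_two] using this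
    calc A.mulVec v ⬝ᵥ A.mulVec v ≤ ∑ i, (∑ j, A i j ^ 2) * (v ⬝ᵥ v) :=
          Finset.sum_le_sum fun i _ => h2 i
      _ = Matrix.trace (Aᵀ * A) * (v ⬝ᵥ v) := by
          rw [← Finset.sum_mul]
          congr 1
          rw [Matrix.trace]
          simp only [Matrix.diag, Matrix.mul_apply, Matrix.transpose_apply]
          rw [Finset.sum_comm]
          simp [pow_two]
  calc euclNorm (A.mulVec v) ≤ Real.sqrt (Matrix.trace (Aᵀ * A) * (v ⬝ᵥ v)) :=
        Real.sqrt_le_sqrt h1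
    _ = frobNorm A * euclNorm v := Real.sqrt_mul (by
        have : (0:ℝ) ≤ Matrix.trace (Aᵀ * A) := by
          rw [Matrix.trace]
          apply Finset.sum_nonneg
          intro i _
          simp only [Matrix.diag, Matrix.mul_apply, Matrix.transpose_apply]
          exact Finset.sum_nonneg fun j _ => mul_self_nonneg _
        exact this) _

private lemma euclNorm_unitize' {p : ℕ} (z : Fin p → ℝ) (hz : euclNorm z ≠ 0) :
    euclNorm (unitize z) = 1 := by
  have h0 : 0 < euclNorm z := lt_of_le_of_ne (euclNorm_nonneg' z) (Ne.symm hz)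
  have : unitize z ⬝ᵥ unitize z = ((euclNorm z)⁻¹)^2 * (z ⬝ᵥ z) := by
    simp [unitize, smul_dotProduct, dotProduct_smul, pow_two]; ring
  rw [show euclNorm (unitize z) = Real.sqrt (unitize z ⬝ᵥ unitize z) from rfl, this,
    Real.sqrt_mul (sq_nonneg _), Real.sqrt_sq (by positivity), ← sq_euclNorm' z,
    Real.sqrt_sq h0.le]
  field_simp

private lemma dot_self_of_unit' {p : ℕ} (x : Fin p → ℝ) (hx : euclNorm x = 1) : x ⬝ᵥ x = 1 := by
  have := sq_euclNorm' x
  rw [hx] at this; simpa using this.symm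

private lemma specSet_bddAbove' {p : ℕ} (A : Matrix (Fin p) (Fin p) ℝ) :
    BddAbove {r : ℝ | ∃ v : Fin p → ℝ, euclNorm v = 1 ∧ r = euclNorm (A.mulVec v)} := by
  refine ⟨frobNorm A, fun r hr => ?_⟩
  obtain ⟨v, hv, rfl⟩ := hr
  simpa [hv] using euclNorm_mulVec_le' A v

private lemma specNorm_nonneg' {p : ℕ} (hp : 1 ≤ p) (A : Matrix (Fin p) (Fin p) ℝ) :
    0 ≤ specNorm A := by
  have hmem : euclNorm (A.mulVec (Pi.single (⟨0, hp⟩ : Fin p) 1)) ∈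
      {r : ℝ | ∃ v : Fin p → ℝ, euclNorm v = 1 ∧ r = euclNorm (A.mulVec v)} := by
    refine ⟨_, ?_, rfl⟩
    simp [euclNorm, dotProduct, Pi.single_apply]
  exact le_trans (euclNorm_nonneg' _) (le_csSup (specSet_bddAbove' A) hmem)

private lemma quad_le_spec' {p : ℕ} (A : Matrix (Fin p) (Fin p) ℝ) (x : Fin p → ℝ)
    (hx : euclNorm x = 1) : |x ⬝ᵥ A.mulVec x| ≤ specNorm A := by
  have h1 : |x ⬝ᵥ A.mulVec x| ≤ euclNorm (A.mulVec x) := by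
    simpa [hx] using abs_dot_le' x (A.mulVec x)
  exact h1.trans (le_csSup (specSet_bddAbove' A) ⟨x, hx, rfl⟩)

private lemma quad_le_frob' {p : ℕ} (A : Matrix (Fin p) (Fin p) ℝ) (x : Fin p → ℝ)
    (hx : euclNorm x ≤ 1) : |x ⬝ᵥ A.mulVec x| ≤ frobNorm A := by
  have h1 := abs_dot_le' x (A.mulVec x)
  have h2 := euclNorm_mulVec_le' A x
  have h3 := euclNorm_nonneg' x
  have h4 := frobNorm_nonneg' A
  nlinarith [euclNorm_nonneg' (A.mulVec x)]

private lemma measurable_quad' {p : ℕ} (A : Matrix (Fin p) (Fin p) ℝ) :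
    Measurable fun z : Fin p → ℝ => unitize z ⬝ᵥ A.mulVec (unitize z) := by
  have hm : Measurable (unitize (p := p)) := by
    refine measurable_pi_lambda _ fun i => ?_
    have hdot : Measurable fun z : Fin p → ℝ => z ⬝ᵥ z :=
      Finset.measurable_sum _ fun j _ => (measurable_pi_apply j).mul (measurable_pi_apply j)
    simp only [unitize, Pi.smul_apply, smul_eq_mul, euclNorm]
    exact ((Real.continuous_sqrt.measurable.comp hdot).inv).mul (measurable_pi_apply i)
  have hc : Continuous fun x : Fin p → ℝ => x ⬝ᵥ A.mulVec x := by
    simp only [dotProduct, Matrix.mulVec]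
    exact continuous_finset_sum _ fun i _ => (continuous_apply i).mul
      (continuous_finset_sum _ fun j _ => (continuous_const.mul (continuous_apply j)))
  exact hc.measurable.comp hm

private lemma unitize_of_zero' {p : ℕ} (z : Fin p → ℝ) (hz : euclNorm z = 0) : unitize z = 0 := by
  simp [unitize, hz]


private lemma ratio_core (p : ℕ) (hp : 1 ≤ p) (U ΔΩ : Matrix (Fin p) (Fin p) ℝ)
    (hε : specNorm ΔΩ < 1) (ν : ℕ) (hν : 1 ≤ ν)
    (hnn : ∀ z : Fin p → ℝ, 0 ≤ (unitize z ⬝ᵥ U.mulVec (unitize z)) ^ ν) :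
    (∫ z, (unitize z ⬝ᵥ U.mulVec (unitize z)) ^ ν ∂(stdGaussian p)) / (1 + specNorm ΔΩ) ^ ν
        ≤ ∫ z, ((unitize z ⬝ᵥ U.mulVec (unitize z))
            / (unitize z ⬝ᵥ (1 + ΔΩ).mulVec (unitize z))) ^ ν ∂(stdGaussian p)
      ∧ ∫ z, ((unitize z ⬝ᵥ U.mulVec (unitize z))
            / (unitize z ⬝ᵥ (1 + ΔΩ).mulVec (unitize z))) ^ ν ∂(stdGaussian p)
        ≤ (∫ z, (unitize z ⬝ᵥ U.mulVec (unitize z)) ^ ν ∂(stdGaussian p))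
            / (1 - specNorm ΔΩ) ^ ν := by
  set ε := specNorm ΔΩ with hεdef
  have hε0 : 0 ≤ ε := specNorm_nonneg' hp ΔΩ
  have hε1 : 0 < 1 - ε := by linarith
  have hε2 : 0 < 1 + ε := by linarith
  set a : (Fin p → ℝ) → ℝ := fun z => unitize z ⬝ᵥ U.mulVec (unitize z) with ha
  set d : (Fin p → ℝ) → ℝ := fun z => unitize z ⬝ᵥ (1 + ΔΩ).mulVec (unitize z) with hd
  -- pointwise bounds
  have key : ∀ z : Fin p → ℝ,
      a z ^ ν / (1 + ε) ^ ν ≤ (a z / d z) ^ ν ∧ (a z / d z) ^ ν ≤ a z ^ ν / (1 - ε) ^ ν := by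
    intro z
    by_cases hz : euclNorm z = 0
    · have h0 : unitize z = 0 := unitize_of_zero' z hz
      have ha0 : a z = 0 := by simp [ha, h0]
      have hd0 : d z = 0 := by simp [hd, h0]
      constructor <;> simp [ha0, hd0, zero_pow (by omega : ν ≠ 0)]
    · have hx : euclNorm (unitize z) = 1 := euclNorm_unitize' z hz
      have hdot1 : unitize z ⬝ᵥ unitize z = 1 := dot_self_of_unit' _ hx
      have ht : |unitize z ⬝ᵥ ΔΩ.mulVec (unitize z)| ≤ ε := quad_le_spec' ΔΩ _ hx
      have hdval : d z = 1 + unitize z ⬝ᵥ ΔΩ.mulVec (unitize z) := by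
        simp [hd, Matrix.add_mulVec, dotProduct_add, Matrix.one_mulVec, hdot1]
      have habs := abs_le.mp ht
      have hdlo : 1 - ε ≤ d z := by rw [hdval]; linarith
      have hdhi : d z ≤ 1 + ε := by rw [hdval]; linarith
      have hdpos : 0 < d z := lt_of_lt_of_le hε1 hdlo
      have hrw : (a z / d z) ^ ν = a z ^ ν / d z ^ ν := div_pow _ _ _
      constructor
      · rw [hrw]
        gcongr
        exact hnn z
      · rw [hrw]
        gcongr
        exact hnn z
  -- integrability
  have hprob : IsProbabilityMeasure (stdGaussian p) := by
    unfold _root_.stdGaussian; infer_instance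
  set M := frobNorm U with hM
  have hM0 : 0 ≤ M := frobNorm_nonneg' U
  have haM : ∀ z, |a z| ≤ M := by
    intro z
    by_cases hz : euclNorm z = 0
    · apply quad_le_frob'; rw [unitize_of_zero' z hz]; simp [euclNorm]
    · apply quad_le_frob'; rw [euclNorm_unitize' z hz]
  have hma : Measurable a := measurable_quad' U
  have hmd : Measurable d := measurable_quad' (1 + ΔΩ)
  have hint1 : Integrable (fun z => a z ^ ν) (stdGaussian p) := by
    refine Integrable.mono' (integrable_const (M ^ ν)) ((hma.pow_const ν).aestronglyMeasurable)
      (ae_of_all _ fun z => ?_)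
    rw [Real.norm_eq_abs, abs_pow]
    exact pow_le_pow_left₀ (abs_nonneg _) (haM z) ν
  have hint2 : Integrable (fun z => (a z / d z) ^ ν) (stdGaussian p) := by
    refine Integrable.mono' (integrable_const ((M / (1 - ε)) ^ ν))
      (((hma.div hmd).pow_const ν).aestronglyMeasurable) (ae_of_all _ fun z => ?_)
    rw [Real.norm_eq_abs, abs_pow]
    refine pow_le_pow_left₀ (abs_nonneg _) ?_ ν
    by_cases hz : euclNorm z = 0
    · have h0 : unitize z = 0 := unitize_of_zero' z hz
      have ha0 : a z = 0 := by simp [ha, h0]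
      simp [ha0]
      positivity
    · have hx : euclNorm (unitize z) = 1 := euclNorm_unitize' z hz
      have hdot1 : unitize z ⬝ᵥ unitize z = 1 := dot_self_of_unit' _ hx
      have ht := abs_le.mp (quad_le_spec' ΔΩ _ hx)
      have hdval : d z = 1 + unitize z ⬝ᵥ ΔΩ.mulVec (unitize z) := by
        simp [hd, Matrix.add_mulVec, dotProduct_add, Matrix.one_mulVec, hdot1]
      have hdlo : 1 - ε ≤ d z := by rw [hdval]; linarith [ht.1]
      have hdpos : 0 < d z := lt_of_lt_of_le hε1 hdlo
      rw [abs_div, abs_of_pos hdpos]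
      exact div_le_div₀ hM0 (haM z) hε1 hdlo
  constructor
  · calc (∫ z, a z ^ ν ∂(stdGaussian p)) / (1 + ε) ^ ν
        = ∫ z, a z ^ ν / (1 + ε) ^ ν ∂(stdGaussian p) := (integral_div _ _).symm
      _ ≤ ∫ z, (a z / d z) ^ ν ∂(stdGaussian p) :=
          integral_mono (hint1.div_const _) hint2 fun z => (key z).1
  · calc ∫ z, (a z / d z) ^ ν ∂(stdGaussian p)
        ≤ ∫ z, a z ^ ν / (1 - ε) ^ ν ∂(stdGaussian p) :=
          integral_mono hint2 (hint1.div_const _) fun z => (key z).2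
      _ = (∫ z, a z ^ ν ∂(stdGaussian p)) / (1 - ε) ^ ν := integral_div _ _


/-- For `x = z/‖z‖` with `z` standard Gaussian in `ℝᵖ`, symmetric `U`, symmetric
`ΔΩ'` with `ε = ‖ΔΩ'‖₂ < 1` and `Ω' = I + ΔΩ'`: for every even `ν ≥ 2`,
`E[(xᵀUx)ᵛ]/(1+ε)ᵛ ≤ E[((xᵀUx)/(xᵀΩ'x))ᵛ] ≤ E[(xᵀUx)ᵛ]/(1−ε)ᵛ`; moreover the same two-sided
bound holds for every `ν ≥ 1` when `U` is positive semidefinite. -/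
theorem ratio_moment_sandwich (p : ℕ) (hp : 1 ≤ p)
    (U ΔΩ : Matrix (Fin p) (Fin p) ℝ) (hU : U.IsSymm) (hΔ : ΔΩ.IsSymm)
    (hε : specNorm ΔΩ < 1) :
    (∀ ν : ℕ, 2 ≤ ν → Even ν →
      (∫ z, (unitize z ⬝ᵥ U.mulVec (unitize z)) ^ ν ∂(stdGaussian p)) / (1 + specNorm ΔΩ) ^ ν
        ≤ ∫ z, ((unitize z ⬝ᵥ U.mulVec (unitize z))
            / (unitize z ⬝ᵥ (1 + ΔΩ).mulVec (unitize z))) ^ ν ∂(stdGaussian p)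
      ∧ ∫ z, ((unitize z ⬝ᵥ U.mulVec (unitize z))
            / (unitize z ⬝ᵥ (1 + ΔΩ).mulVec (unitize z))) ^ ν ∂(stdGaussian p)
        ≤ (∫ z, (unitize z ⬝ᵥ U.mulVec (unitize z)) ^ ν ∂(stdGaussian p))
            / (1 - specNorm ΔΩ) ^ ν)
    ∧ (U.PosSemidef → ∀ ν : ℕ, 1 ≤ ν →
      (∫ z, (unitize z ⬝ᵥ U.mulVec (unitize z)) ^ ν ∂(stdGaussian p)) / (1 + specNorm ΔΩ) ^ ν
        ≤ ∫ z, ((unitize z ⬝ᵥ U.mulVec (unitize z))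
            / (unitize z ⬝ᵥ (1 + ΔΩ).mulVec (unitize z))) ^ ν ∂(stdGaussian p)
      ∧ ∫ z, ((unitize z ⬝ᵥ U.mulVec (unitize z))
            / (unitize z ⬝ᵥ (1 + ΔΩ).mulVec (unitize z))) ^ ν ∂(stdGaussian p)
        ≤ (∫ z, (unitize z ⬝ᵥ U.mulVec (unitize z)) ^ ν ∂(stdGaussian p))
            / (1 - specNorm ΔΩ) ^ ν) := by
  constructor
  · intro ν h2 heven
    exact ratio_core p hp U ΔΩ hε ν (by omega) (fun z => heven.pow_nonneg _)
  · intro hpsd ν h1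
    exact ratio_core p hp U ΔΩ hε ν h1
      (fun z => pow_nonneg (by simpa using hpsd.dotProduct_mulVec_nonneg (unitize z)) ν)
end

section
/- Let p ≥ 1, let Θ₀ be a symmetric positive definite p×p real matrix, let z be a standard Gaussian vector in ℝᵖ, and set x = Θ₀^{1/2} z/‖Θ₀^{1/2} z‖ (so x is Angular Central Gaussian with shape matrix Θ₀). Then for every symmetric p×p real matrix U, the expected gradient of the negative log-likelihood at the true parameter Ω₀ = Θ₀⁻¹ vanishes: E[ −Tr(Θ₀U) + p·(xᵀUx)/(xᵀΘ₀⁻¹x) ] = 0, equivalently E[ p·(xᵀUx)/(xᵀΘ₀⁻¹x) ] = Tr(Θ₀U). -/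
open MeasureTheory ProbabilityTheory Matrix

section OldSqrt

open scoped ComplexOrder

/-- The positive semidefinite square root of a positive semidefinite matrix
(the definition `Matrix.PosSemidef.sqrt` of the older Mathlib, since removed). -/
noncomputable def Matrix.PosSemidef.sqrt {n : Type*} [Fintype n] [DecidableEq n]
    {𝕜 : Type*} [RCLike 𝕜] {A : Matrix n n 𝕜} (hA : A.PosSemidef) : Matrix n n 𝕜 :=
  hA.1.eigenvectorUnitary.1 * diagonal ((↑) ∘ (Real.sqrt ∘ hA.1.eigenvalues)) *
  (star hA.1.eigenvectorUnitary : Matrix n n 𝕜)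

end OldSqrt

lemma psd_sqrt_mul_self {p : ℕ} {A : Matrix (Fin p) (Fin p) ℝ} (hA : A.PosSemidef) :
    hA.sqrt * hA.sqrt = A := by
  have hCC := Unitary.coe_star_mul_self hA.1.eigenvectorUnitary
  unfold Matrix.PosSemidef.sqrt
  calc _ = (hA.1.eigenvectorUnitary : Matrix (Fin p) (Fin p) ℝ)
        * (diagonal (RCLike.ofReal ∘ (Real.sqrt ∘ hA.1.eigenvalues))
          * ((star hA.1.eigenvectorUnitary : Matrix (Fin p) (Fin p) ℝ)
            * (hA.1.eigenvectorUnitary : Matrix (Fin p) (Fin p) ℝ))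
          * diagonal (RCLike.ofReal ∘ (Real.sqrt ∘ hA.1.eigenvalues)))
        * (star hA.1.eigenvectorUnitary : Matrix (Fin p) (Fin p) ℝ) := by
        simp only [Matrix.mul_assoc]
    _ = A := by
      rw [hCC, Matrix.mul_one, diagonal_mul_diagonal]
      conv_rhs => rw [hA.1.spectral_theorem]
      rw [Unitary.conjStarAlgAut_apply]
      congr 3
      funext i
      simp [Real.mul_self_sqrt (hA.eigenvalues_nonneg i)]

instance (p : ℕ) : IsProbabilityMeasure (stdGaussian p) := by
  unfold _root_.stdGaussian; infer_instance

lemma meas_dot (p : ℕ) : Measurable (fun z : Fin p → ℝ => z ⬝ᵥ z) := by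
  unfold dotProduct
  exact Finset.measurable_sum _ fun i _ => (measurable_pi_apply i).mul (measurable_pi_apply i)

lemma ae_ne_zero (p : ℕ) (hp : 1 ≤ p) : ∀ᵐ z ∂(stdGaussian p), z ≠ 0 := by
  have h0 : stdGaussian p {(0 : Fin p → ℝ)} = 0 := by
    have : ({(0 : Fin p → ℝ)} : Set (Fin p → ℝ)) = Set.pi Set.univ (fun _ => ({0} : Set ℝ)) := by
      ext z; simp [Set.eq_univ_iff_forall, funext_iff]
    rw [this]
    unfold _root_.stdGaussian
    rw [Measure.pi_pi]
    have hg : gaussianReal 0 1 ({0} : Set ℝ) = 0 := by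
      refine gaussianReal_absolutelyContinuous 0 (by norm_num) ?_
      simp
    rw [Finset.prod_eq_zero (Finset.mem_univ ⟨0, hp⟩) hg]
  filter_upwards [measure_eq_zero_iff_ae_notMem.mp h0] with z hz
  simpa using hz

lemma dot_pos {p : ℕ} {z : Fin p → ℝ} (hz : z ≠ 0) : 0 < z ⬝ᵥ z := by
  rcases (dotProduct_self_eq_zero (v := z)).not.mpr hz with h
  have hnn : 0 ≤ z ⬝ᵥ z := by
    unfold dotProduct; exact Finset.sum_nonneg fun i _ => mul_self_nonneg _
  exact lt_of_le_of_ne hnn (Ne.symm h)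

lemma g_bound {p : ℕ} (i j : Fin p) (z : Fin p → ℝ) :
    |z i * z j / (z ⬝ᵥ z)| ≤ 1 := by
  by_cases hz : z ⬝ᵥ z = 0
  · simp [hz]
  · have hpos : 0 < z ⬝ᵥ z := by
      rcases eq_or_ne z 0 with rfl | h
      · simp at hz
      · exact dot_pos h
    rw [abs_div, abs_of_pos hpos, div_le_one hpos]
    have hi2 : ∀ k : Fin p, z k ^ 2 ≤ z ⬝ᵥ z := by
      intro k
      unfold dotProduct
      have := Finset.single_le_sum (f := fun l => z l * z l)
        (fun l _ => mul_self_nonneg (z l)) (Finset.mem_univ k)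
      simpa [pow_two] using this
    have h1 : |z i| ≤ Real.sqrt (z ⬝ᵥ z) := by
      rw [← Real.sqrt_sq_eq_abs]; exact Real.sqrt_le_sqrt (hi2 i)
    have h2 : |z j| ≤ Real.sqrt (z ⬝ᵥ z) := by
      rw [← Real.sqrt_sq_eq_abs]; exact Real.sqrt_le_sqrt (hi2 j)
    calc |z i * z j| = |z i| * |z j| := abs_mul _ _
      _ ≤ Real.sqrt (z ⬝ᵥ z) * Real.sqrt (z ⬝ᵥ z) :=
          mul_le_mul h1 h2 (abs_nonneg _) (Real.sqrt_nonneg _)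
      _ = z ⬝ᵥ z := Real.mul_self_sqrt hpos.le

lemma g_meas {p : ℕ} (i j : Fin p) :
    Measurable (fun z : Fin p → ℝ => z i * z j / (z ⬝ᵥ z)) :=
  ((measurable_pi_apply i).mul (measurable_pi_apply j)).div (meas_dot p)

lemma g_integrable {p : ℕ} (i j : Fin p) :
    Integrable (fun z : Fin p → ℝ => z i * z j / (z ⬝ᵥ z)) (stdGaussian p) := by
  refine ⟨(g_meas i j).aestronglyMeasurable, ?_⟩
  refine HasFiniteIntegral.of_bounded (C := 1) ?_
  filter_upwards with z
  have := g_bound i j z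
  rw [Real.norm_eq_abs]
  exact_mod_cast this

lemma mp_neg : MeasurePreserving (fun x : ℝ => -x) (gaussianReal 0 1) (gaussianReal 0 1) := by
  refine ⟨measurable_neg, ?_⟩
  have h := gaussianReal_map_const_mul (μ := 0) (v := 1) (-1)
  have he : (fun x : ℝ => -x) = ((-1 : ℝ) * ·) := by funext x; ring
  rw [he, h]
  norm_num

lemma mp_negCoord {p : ℕ} (i : Fin p) :
    MeasurePreserving (fun z : Fin p → ℝ => fun k => if k = i then -z k else z k)
      (stdGaussian p) (stdGaussian p) := by
  have := measurePreserving_pi (fun _ : Fin p => gaussianReal 0 1)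
    (fun _ : Fin p => gaussianReal 0 1)
    (f := fun k : Fin p => fun x : ℝ => if k = i then -x else x)
    (fun k => by
      by_cases h : k = i
      · simpa [h] using mp_neg
      · simp only [h, ↓reduceIte]; exact MeasurePreserving.id (gaussianReal 0 1))
  exact this


noncomputable def II (p : ℕ) (i j : Fin p) : ℝ :=
  ∫ z, z i * z j / (z ⬝ᵥ z) ∂(stdGaussian p)

lemma II_offdiag {p : ℕ} {i j : Fin p} (hij : i ≠ j) : II p i j = 0 := by
  have hmp := mp_negCoord i
  have key : II p i j = - II p i j := by
    unfold II
    conv_lhs => rw [← hmp.map_eq]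
    rw [integral_map hmp.measurable.aemeasurable (g_meas i j).aestronglyMeasurable]
    have heq : ∀ z : Fin p → ℝ,
        ((fun k => if k = i then -z k else z k) i * (fun k => if k = i then -z k else z k) j
          / ((fun k => if k = i then -z k else z k) ⬝ᵥ (fun k => if k = i then -z k else z k)))
        = -(z i * z j / (z ⬝ᵥ z)) := by
      intro z
      have hd : (fun k => if k = i then -z k else z k) ⬝ᵥ (fun k => if k = i then -z k else z k)
          = z ⬝ᵥ z := by
        unfold dotProduct
        refine Finset.sum_congr rfl fun k _ => ?_
        by_cases h : k = i <;> simp [h]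
      rw [hd]
      beta_reduce
      rw [if_pos rfl, if_neg hij.symm]
      ring
    rw [show (fun x : Fin p → ℝ =>
        (fun k => if k = i then -x k else x k) i * (fun k => if k = i then -x k else x k) j /
          (fun k => if k = i then -x k else x k) ⬝ᵥ fun k => if k = i then -x k else x k)
        = fun z : Fin p → ℝ => -(z i * z j / (z ⬝ᵥ z)) from funext heq]
    rw [integral_neg]
  linarith

lemma II_diag_eq {p : ℕ} (i j : Fin p) : II p i i = II p j j := by
  set σ : Equiv.Perm (Fin p) := Equiv.swap i j with hσ
  have hmp := measurePreserving_piCongrLeft (fun _ : Fin p => gaussianReal 0 1) σ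
  have hmp' : MeasurePreserving (MeasurableEquiv.piCongrLeft (fun _ => ℝ) σ)
      (stdGaussian p) (stdGaussian p) := hmp
  unfold II
  conv_lhs => rw [← hmp'.map_eq]
  rw [integral_map hmp'.measurable.aemeasurable (g_meas i i).aestronglyMeasurable]
  refine integral_congr_ae (Filter.Eventually.of_forall fun z => ?_)
  have happ : (MeasurableEquiv.piCongrLeft (fun _ => ℝ) σ) z = fun k => z (σ.symm k) := by
    ext k; simp [MeasurableEquiv.piCongrLeft, Equiv.piCongrLeft]
  beta_reduce
  rw [happ]
  have hd : (fun k => z (σ.symm k)) ⬝ᵥ (fun k => z (σ.symm k)) = z ⬝ᵥ z := by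
    unfold dotProduct
    exact σ.symm.sum_comp (fun k => z k * z k)
  rw [hd]
  simp [hσ, Equiv.swap_apply_left]

lemma II_diag_sum {p : ℕ} (hp : 1 ≤ p) : ∑ i : Fin p, II p i i = 1 := by
  unfold II
  rw [← integral_finset_sum _ (fun i _ => g_integrable i i)]
  have : ∫ z, (∑ i : Fin p, z i * z i / (z ⬝ᵥ z)) ∂(stdGaussian p)
      = ∫ _z, (1 : ℝ) ∂(stdGaussian p) := by
    refine integral_congr_ae ?_
    filter_upwards [ae_ne_zero p hp] with z hz
    have hpos := dot_pos hz
    rw [← Finset.sum_div]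
    rw [show (∑ i : Fin p, z i * z i) = z ⬝ᵥ z from rfl]
    exact div_self hpos.ne'
  rw [this]
  simp

lemma II_diag {p : ℕ} (hp : 1 ≤ p) (i : Fin p) : II p i i = 1 / p := by
  have hsum := II_diag_sum hp
  have hall : ∀ j : Fin p, II p j j = II p i i := fun j => II_diag_eq j i
  rw [Finset.sum_congr rfl (fun j _ => hall j), Finset.sum_const] at hsum
  simp only [Finset.card_univ, Fintype.card_fin, nsmul_eq_mul] at hsum
  have hp0 : (p : ℝ) ≠ 0 := Nat.cast_ne_zero.mpr (by omega)
  field_simp at hsum ⊢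
  linarith

lemma integral_quadform {p : ℕ} (hp : 1 ≤ p) (A : Matrix (Fin p) (Fin p) ℝ) :
    ∫ z, (p : ℝ) * ((z ⬝ᵥ A.mulVec z) / (z ⬝ᵥ z)) ∂(stdGaussian p) = Matrix.trace A := by
  have hrw : ∀ z : Fin p → ℝ, (p : ℝ) * ((z ⬝ᵥ A.mulVec z) / (z ⬝ᵥ z))
      = ∑ i : Fin p, ∑ j : Fin p, ((p : ℝ) * A i j) * (z i * z j / (z ⬝ᵥ z)) := by
    intro z
    have h1 : z ⬝ᵥ A.mulVec z = ∑ i : Fin p, ∑ j : Fin p, A i j * (z i * z j) := by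
      simp only [dotProduct, Matrix.mulVec, Finset.mul_sum]
      exact Finset.sum_congr rfl fun i _ => Finset.sum_congr rfl fun j _ => by ring
    rw [h1]
    simp only [Finset.sum_div, Finset.mul_sum]
    exact Finset.sum_congr rfl fun i _ => Finset.sum_congr rfl fun j _ => by ring
  simp_rw [hrw]
  rw [integral_finset_sum _ (fun i _ => integrable_finset_sum _
    (fun j _ => (g_integrable i j).const_mul _))]
  have : ∀ i : Fin p, (∫ z, ∑ j : Fin p, ((p : ℝ) * A i j) * (z i * z j / (z ⬝ᵥ z))
      ∂(stdGaussian p)) = ∑ j : Fin p, ((p : ℝ) * A i j) * II p i j := by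
    intro i
    rw [integral_finset_sum _ (fun j _ => (g_integrable i j).const_mul _)]
    exact Finset.sum_congr rfl fun j _ => integral_const_mul _ _
  simp_rw [this]
  have hterm : ∀ i : Fin p, (∑ j : Fin p, ((p : ℝ) * A i j) * II p i j) = A i i := by
    intro i
    rw [Finset.sum_eq_single i]
    · rw [II_diag hp i]
      have hp0 : (p : ℝ) ≠ 0 := Nat.cast_ne_zero.mpr (by omega)
      field_simp
    · intro j _ hji
      rw [II_offdiag (Ne.symm hji), mul_zero]
    · intro h; exact absurd (Finset.mem_univ i) h
  simp_rw [hterm]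
  rfl

lemma quad_transfer {p : ℕ} (S M : Matrix (Fin p) (Fin p) ℝ) (z : Fin p → ℝ) :
    (S.mulVec z) ⬝ᵥ M.mulVec (S.mulVec z) = z ⬝ᵥ (Sᵀ * M * S).mulVec z := by
  rw [Matrix.mulVec_mulVec]
  rw [show S.mulVec z = Matrix.vecMul z Sᵀ from (Matrix.vecMul_transpose S z).symm]
  rw [← Matrix.dotProduct_mulVec, Matrix.mulVec_mulVec, Matrix.mul_assoc]

lemma unitize_quad {p : ℕ} (M : Matrix (Fin p) (Fin p) ℝ) (w : Fin p → ℝ) :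
    (unitize w) ⬝ᵥ M.mulVec (unitize w)
      = ((euclNorm w)⁻¹ * (euclNorm w)⁻¹) * (w ⬝ᵥ M.mulVec w) := by
  unfold unitize
  rw [Matrix.mulVec_smul, smul_dotProduct, dotProduct_smul]
  simp [smul_eq_mul]; ring

section main
variable {p : ℕ} (Θ₀ : Matrix (Fin p) (Fin p) ℝ) (hΘ₀ : Θ₀.PosDef)

lemma sqrt_transpose : (hΘ₀.posSemidef.sqrt)ᵀ = hΘ₀.posSemidef.sqrt := by
  unfold Matrix.PosSemidef.sqrt
  simp [Matrix.transpose_mul, Matrix.star_eq_conjTranspose,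
    conjTranspose_eq_transpose_of_trivial, Matrix.mul_assoc]

lemma sqrt_det_isUnit : IsUnit (hΘ₀.posSemidef.sqrt).det := by
  have h : (hΘ₀.posSemidef.sqrt).det * (hΘ₀.posSemidef.sqrt).det = Θ₀.det := by
    rw [← Matrix.det_mul, psd_sqrt_mul_self hΘ₀.posSemidef]
  have hd := hΘ₀.det_pos
  refine isUnit_iff_ne_zero.mpr fun h0 => ?_
  rw [h0, mul_zero] at h
  exact hd.ne' h.symm

lemma sqrt_inv_quad : hΘ₀.posSemidef.sqrt * Θ₀⁻¹ * hΘ₀.posSemidef.sqrt = 1 := by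
  set S := hΘ₀.posSemidef.sqrt
  have hdet := sqrt_det_isUnit Θ₀ hΘ₀
  have : Θ₀⁻¹ = S⁻¹ * S⁻¹ := by
    rw [← psd_sqrt_mul_self hΘ₀.posSemidef, Matrix.mul_inv_rev]
  rw [this, ← Matrix.mul_assoc, Matrix.mul_assoc (S * S⁻¹),
    Matrix.mul_nonsing_inv S hdet, Matrix.nonsing_inv_mul S hdet, Matrix.one_mul]

lemma sqrt_mulVec_ne {z : Fin p → ℝ} (hz : z ≠ 0) : hΘ₀.posSemidef.sqrt.mulVec z ≠ 0 := by
  intro h0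
  have hdet := sqrt_det_isUnit Θ₀ hΘ₀
  have : z = (hΘ₀.posSemidef.sqrt⁻¹ * hΘ₀.posSemidef.sqrt).mulVec z := by
    rw [Matrix.nonsing_inv_mul _ hdet, Matrix.one_mulVec]
  rw [← Matrix.mulVec_mulVec, h0, Matrix.mulVec_zero] at this
  exact hz this

lemma pointwise_ratio (U : Matrix (Fin p) (Fin p) ℝ) {z : Fin p → ℝ} (hz : z ≠ 0) :
    (unitize (hΘ₀.posSemidef.sqrt.mulVec z) ⬝ᵥ U.mulVec (unitize (hΘ₀.posSemidef.sqrt.mulVec z)))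
      / (unitize (hΘ₀.posSemidef.sqrt.mulVec z)
          ⬝ᵥ (Θ₀⁻¹).mulVec (unitize (hΘ₀.posSemidef.sqrt.mulVec z)))
    = (z ⬝ᵥ (hΘ₀.posSemidef.sqrt * U * hΘ₀.posSemidef.sqrt).mulVec z) / (z ⬝ᵥ z) := by
  set S := hΘ₀.posSemidef.sqrt with hS
  set w := S.mulVec z with hw
  have hwne : w ≠ 0 := sqrt_mulVec_ne Θ₀ hΘ₀ hz
  have hwpos : 0 < w ⬝ᵥ w := dot_pos hwne
  have hnpos : 0 < euclNorm w := Real.sqrt_pos.mpr hwpos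
  have hc : (euclNorm w)⁻¹ * (euclNorm w)⁻¹ ≠ 0 :=
    mul_ne_zero (inv_ne_zero hnpos.ne') (inv_ne_zero hnpos.ne')
  rw [unitize_quad, unitize_quad, mul_div_mul_left _ _ hc]
  rw [hw, quad_transfer, quad_transfer, sqrt_transpose Θ₀ hΘ₀]
  rw [sqrt_inv_quad Θ₀ hΘ₀, Matrix.one_mulVec]

end main

lemma quad_expand {p : ℕ} (A : Matrix (Fin p) (Fin p) ℝ) (z : Fin p → ℝ) :
    (p : ℝ) * ((z ⬝ᵥ A.mulVec z) / (z ⬝ᵥ z))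
      = ∑ i : Fin p, ∑ j : Fin p, ((p : ℝ) * A i j) * (z i * z j / (z ⬝ᵥ z)) := by
  have h1 : z ⬝ᵥ A.mulVec z = ∑ i : Fin p, ∑ j : Fin p, A i j * (z i * z j) := by
    simp only [dotProduct, Matrix.mulVec, Finset.mul_sum]
    exact Finset.sum_congr rfl fun i _ => Finset.sum_congr rfl fun j _ => by ring
  rw [h1]
  simp only [Finset.sum_div, Finset.mul_sum]
  exact Finset.sum_congr rfl fun i _ => Finset.sum_congr rfl fun j _ => by ring

lemma quadform_integrable {p : ℕ} (A : Matrix (Fin p) (Fin p) ℝ) :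
    Integrable (fun z => (p : ℝ) * ((z ⬝ᵥ A.mulVec z) / (z ⬝ᵥ z))) (stdGaussian p) := by
  rw [show (fun z : Fin p → ℝ => (p : ℝ) * ((z ⬝ᵥ A.mulVec z) / (z ⬝ᵥ z)))
      = fun z => ∑ i : Fin p, ∑ j : Fin p, ((p : ℝ) * A i j) * (z i * z j / (z ⬝ᵥ z))
    from funext (quad_expand A)]
  exact integrable_finset_sum _ fun i _ => integrable_finset_sum _
    fun j _ => (g_integrable i j).const_mul _


/-- For `x = Θ₀^{1/2}z/‖Θ₀^{1/2}z‖` with `z` standard Gaussian in `ℝᵖ` and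
`Θ₀` symmetric positive definite, the expected gradient of the ACG negative log-likelihood at
the true parameter `Ω₀ = Θ₀⁻¹` vanishes: `E[−Tr(Θ₀U) + p(xᵀUx)/(xᵀΘ₀⁻¹x)] = 0`, equivalently
`E[p(xᵀUx)/(xᵀΘ₀⁻¹x)] = Tr(Θ₀U)`, for every symmetric `U`. -/
theorem expected_gradient_vanishes (p : ℕ) (hp : 1 ≤ p)
    (Θ₀ : Matrix (Fin p) (Fin p) ℝ) (hΘ₀ : Θ₀.PosDef)
    (U : Matrix (Fin p) (Fin p) ℝ) (hU : U.IsSymm) :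
    (∫ z, (-(Matrix.trace (Θ₀ * U))
        + (p : ℝ) * ((unitize (hΘ₀.posSemidef.sqrt.mulVec z)
              ⬝ᵥ U.mulVec (unitize (hΘ₀.posSemidef.sqrt.mulVec z)))
            / (unitize (hΘ₀.posSemidef.sqrt.mulVec z)
              ⬝ᵥ (Θ₀⁻¹).mulVec (unitize (hΘ₀.posSemidef.sqrt.mulVec z))))) ∂(stdGaussian p) = 0)
    ∧ (∫ z, (p : ℝ) * ((unitize (hΘ₀.posSemidef.sqrt.mulVec z)
              ⬝ᵥ U.mulVec (unitize (hΘ₀.posSemidef.sqrt.mulVec z)))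
            / (unitize (hΘ₀.posSemidef.sqrt.mulVec z)
              ⬝ᵥ (Θ₀⁻¹).mulVec (unitize (hΘ₀.posSemidef.sqrt.mulVec z)))) ∂(stdGaussian p)
        = Matrix.trace (Θ₀ * U)) := by
  set S := hΘ₀.posSemidef.sqrt with hS
  set A := S * U * S with hA
  have htr : Matrix.trace A = Matrix.trace (Θ₀ * U) := by
    rw [hA, Matrix.trace_mul_comm, ← Matrix.mul_assoc, psd_sqrt_mul_self hΘ₀.posSemidef]
  have haeq : (fun z => (p : ℝ) * ((unitize (S.mulVec z) ⬝ᵥ U.mulVec (unitize (S.mulVec z)))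
        / (unitize (S.mulVec z) ⬝ᵥ (Θ₀⁻¹).mulVec (unitize (S.mulVec z)))))
      =ᵐ[stdGaussian p] (fun z => (p : ℝ) * ((z ⬝ᵥ A.mulVec z) / (z ⬝ᵥ z))) := by
    filter_upwards [ae_ne_zero p hp] with z hz
    rw [pointwise_ratio Θ₀ hΘ₀ U hz]
  have h2 : ∫ z, (p : ℝ) * ((unitize (S.mulVec z) ⬝ᵥ U.mulVec (unitize (S.mulVec z)))
        / (unitize (S.mulVec z) ⬝ᵥ (Θ₀⁻¹).mulVec (unitize (S.mulVec z)))) ∂(stdGaussian p)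
      = Matrix.trace (Θ₀ * U) := by
    rw [integral_congr_ae haeq, integral_quadform hp A, htr]
  refine ⟨?_, h2⟩
  have hint : Integrable (fun z => (p : ℝ) * ((unitize (S.mulVec z)
        ⬝ᵥ U.mulVec (unitize (S.mulVec z)))
        / (unitize (S.mulVec z) ⬝ᵥ (Θ₀⁻¹).mulVec (unitize (S.mulVec z))))) (stdGaussian p) :=
    (quadform_integrable A).congr haeq.symm
  rw [integral_add (integrable_const _) hint, integral_const]
  simp only [probReal_univ, one_smul]
  rw [h2]
  ring
end
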